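/- The map P defined on the group of real symplectic 4g₀×4g₀ matrices of the form [[α,β,γ,δ],[β,α,−δ,−γ],[π,ρ,ξ,η],[−ρ,−π,η,ξ]] by P(Σ) = [[α+β, γ−δ],[π+ρ, ξ−η]] is a bijection onto GL(2g₀,ℝ), with inverse σ ↦ G⁻¹(σ, −J(σ⁻¹)ᵀJ). -/

import Mathlib

open Matrix

/-- The space 𝒱 of 4g₀×4g₀ matrices of the block form
[[α,β,γ,δ],[β,α,−δ,−γ],[π,ρ,ξ,η],[−ρ,−π,η,ξ]]. -/
def Vspace (g₀ : ℕ) (R : Type*) [Ring R] :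
    Set (Matrix ((Fin g₀ ⊕ Fin g₀) ⊕ (Fin g₀ ⊕ Fin g₀))
      ((Fin g₀ ⊕ Fin g₀) ⊕ (Fin g₀ ⊕ Fin g₀)) R) :=
  {S | ∃ a b c d p r x e : Matrix (Fin g₀) (Fin g₀) R,
    S = Matrix.fromBlocks (Matrix.fromBlocks a b b a) (Matrix.fromBlocks c d (-d) (-c))
      (Matrix.fromBlocks p r (-r) (-p)) (Matrix.fromBlocks x e e x)}

/-- First component of the map G: [[α+β, γ−δ],[π+ρ, ξ−η]]. -/
def gg1 {g₀ : ℕ} {R : Type*} [Ring R]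
    (S : Matrix ((Fin g₀ ⊕ Fin g₀) ⊕ (Fin g₀ ⊕ Fin g₀))
      ((Fin g₀ ⊕ Fin g₀) ⊕ (Fin g₀ ⊕ Fin g₀)) R) :
    Matrix (Fin g₀ ⊕ Fin g₀) (Fin g₀ ⊕ Fin g₀) R :=
  Matrix.fromBlocks
    (S.submatrix (Sum.inl ∘ Sum.inl) (Sum.inl ∘ Sum.inl) +
      S.submatrix (Sum.inl ∘ Sum.inl) (Sum.inl ∘ Sum.inr))
    (S.submatrix (Sum.inl ∘ Sum.inl) (Sum.inr ∘ Sum.inl) -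
      S.submatrix (Sum.inl ∘ Sum.inl) (Sum.inr ∘ Sum.inr))
    (S.submatrix (Sum.inr ∘ Sum.inl) (Sum.inl ∘ Sum.inl) +
      S.submatrix (Sum.inr ∘ Sum.inl) (Sum.inl ∘ Sum.inr))
    (S.submatrix (Sum.inr ∘ Sum.inl) (Sum.inr ∘ Sum.inl) -
      S.submatrix (Sum.inr ∘ Sum.inl) (Sum.inr ∘ Sum.inr))

/-- Second component of the map G: [[α−β, γ+δ],[π−ρ, ξ+η]]. -/
def gg2 {g₀ : ℕ} {R : Type*} [Ring R]
    (S : Matrix ((Fin g₀ ⊕ Fin g₀) ⊕ (Fin g₀ ⊕ Fin g₀))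
      ((Fin g₀ ⊕ Fin g₀) ⊕ (Fin g₀ ⊕ Fin g₀)) R) :
    Matrix (Fin g₀ ⊕ Fin g₀) (Fin g₀ ⊕ Fin g₀) R :=
  Matrix.fromBlocks
    (S.submatrix (Sum.inl ∘ Sum.inl) (Sum.inl ∘ Sum.inl) -
      S.submatrix (Sum.inl ∘ Sum.inl) (Sum.inl ∘ Sum.inr))
    (S.submatrix (Sum.inl ∘ Sum.inl) (Sum.inr ∘ Sum.inl) +
      S.submatrix (Sum.inl ∘ Sum.inl) (Sum.inr ∘ Sum.inr))
    (S.submatrix (Sum.inr ∘ Sum.inl) (Sum.inl ∘ Sum.inl) -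
      S.submatrix (Sum.inr ∘ Sum.inl) (Sum.inl ∘ Sum.inr))
    (S.submatrix (Sum.inr ∘ Sum.inl) (Sum.inr ∘ Sum.inl) +
      S.submatrix (Sum.inr ∘ Sum.inl) (Sum.inr ∘ Sum.inr))

/-- The standard symplectic matrix J = [[0,Id],[−Id,0]]. -/
def Jstd (n : Type*) (R : Type*) [Ring R] [DecidableEq n] [Fintype n] :
    Matrix (n ⊕ n) (n ⊕ n) R :=
  Matrix.fromBlocks 0 1 (-1) 0

section AuxLemmas

variable {g₀ : ℕ}

lemma add_self_inj' {m n : Type*} {M N : Matrix m n ℝ} (h : M + M = N + N) : M = N := by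
  have h2 : (2:ℝ) • M = (2:ℝ) • N := by rw [two_smul, two_smul]; exact h
  exact smul_right_injective _ (by norm_num) h2

lemma gg1_build (a b c d p r x e : Matrix (Fin g₀) (Fin g₀) ℝ) :
    gg1 (Matrix.fromBlocks (Matrix.fromBlocks a b b a) (Matrix.fromBlocks c d (-d) (-c))
      (Matrix.fromBlocks p r (-r) (-p)) (Matrix.fromBlocks x e e x)) = fromBlocks (a+b) (c-d) (p+r) (x-e) := by
  ext i j
  rcases i with (i|i) <;> rcases j with (j|j) <;>
    simp [gg1, Matrix.add_apply, Matrix.sub_apply]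

lemma gg2_build (a b c d p r x e : Matrix (Fin g₀) (Fin g₀) ℝ) :
    gg2 (Matrix.fromBlocks (Matrix.fromBlocks a b b a) (Matrix.fromBlocks c d (-d) (-c))
      (Matrix.fromBlocks p r (-r) (-p)) (Matrix.fromBlocks x e e x)) = fromBlocks (a-b) (c+d) (p-r) (x+e) := by
  ext i j
  rcases i with (i|i) <;> rcases j with (j|j) <;>
    simp [gg2, Matrix.add_apply, Matrix.sub_apply]

lemma Jstd_transpose (n R : Type*) [Ring R] [DecidableEq n] [Fintype n] :
    (Jstd n R)ᵀ = -Jstd n R := by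
  simp [Jstd, Matrix.fromBlocks_transpose, Matrix.fromBlocks_neg]

lemma Jstd_sq (n R : Type*) [Ring R] [DecidableEq n] [Fintype n] :
    Jstd n R * Jstd n R = -1 := by
  have h : Jstd n R * Jstd n R = Matrix.fromBlocks (-1) 0 0 (-1) := by
    simp [Jstd, Matrix.fromBlocks_multiply]
  rw [h]
  ext i j
  rcases i with (i|i) <;> rcases j with (j|j) <;>
    simp [Matrix.neg_apply, Matrix.one_apply]

lemma KG {n : Type*} [DecidableEq n] [Fintype n]
    {σ₁ σ₂ : Matrix (n ⊕ n) (n ⊕ n) ℝ}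
    (h : σ₁ᵀ * Jstd n ℝ * σ₂ = Jstd n ℝ) : σ₂ᵀ * Jstd n ℝ * σ₁ = Jstd n ℝ := by
  have h2 := congrArg Matrix.transpose h
  simp only [Matrix.transpose_mul, Matrix.transpose_transpose, Jstd_transpose,
    Matrix.mul_neg, Matrix.neg_mul, neg_inj] at h2
  rw [Matrix.mul_assoc]
  exact h2

lemma sympl_iff (a b c d p r x e : Matrix (Fin g₀) (Fin g₀) ℝ) :
    (Matrix.fromBlocks (Matrix.fromBlocks a b b a) (Matrix.fromBlocks c d (-d) (-c))
      (Matrix.fromBlocks p r (-r) (-p)) (Matrix.fromBlocks x e e x))ᵀ * Jstd (Fin g₀ ⊕ Fin g₀) ℝ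
      * (Matrix.fromBlocks (Matrix.fromBlocks a b b a) (Matrix.fromBlocks c d (-d) (-c))
      (Matrix.fromBlocks p r (-r) (-p)) (Matrix.fromBlocks x e e x))
      = Jstd (Fin g₀ ⊕ Fin g₀) ℝ ↔
    ((fromBlocks (a+b) (c-d) (p+r) (x-e))ᵀ * Jstd (Fin g₀) ℝ
        * (fromBlocks (a-b) (c+d) (p-r) (x+e)) = Jstd (Fin g₀) ℝ ∧
     (fromBlocks (a-b) (c+d) (p-r) (x+e))ᵀ * Jstd (Fin g₀) ℝ
        * (fromBlocks (a+b) (c-d) (p+r) (x-e)) = Jstd (Fin g₀) ℝ) := by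
  simp only [Jstd, fromBlocks_transpose, fromBlocks_multiply,
    Matrix.mul_zero, Matrix.zero_mul, Matrix.mul_one, Matrix.one_mul, zero_add, add_zero,
    Matrix.mul_neg, Matrix.neg_mul, Matrix.transpose_neg, mul_neg_one, neg_neg,
    transpose_add, transpose_sub]
  simp only [Matrix.fromBlocks_neg, Matrix.fromBlocks_add, ← Matrix.fromBlocks_zero,
    ← Matrix.fromBlocks_one, Matrix.fromBlocks_neg, neg_zero, Matrix.fromBlocks_inj]
  constructor
  · rintro ⟨⟨h11,h12,-,-⟩,⟨h21,h22,-,-⟩,⟨h31,h32,-,-⟩,h41,h42,-,-⟩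
    refine ⟨⟨?_,?_,?_,?_⟩,?_,?_,?_,?_⟩
    · linear_combination (norm := noncomm_ring) h11 - h12
    · linear_combination (norm := noncomm_ring) h21 + h22
    · linear_combination (norm := noncomm_ring) h31 - h32
    · linear_combination (norm := noncomm_ring) h41 + h42
    · linear_combination (norm := noncomm_ring) h11 + h12
    · linear_combination (norm := noncomm_ring) h21 - h22
    · linear_combination (norm := noncomm_ring) h31 + h32
    · linear_combination (norm := noncomm_ring) h41 - h42
  · rintro ⟨⟨f11,f12,f21,f22⟩,g11,g12,g21,g22⟩
    refine ⟨⟨?_,?_,?_,?_⟩,⟨?_,?_,?_,?_⟩,⟨?_,?_,?_,?_⟩,?_,?_,?_,?_⟩ <;> apply add_self_inj'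
    · linear_combination (norm := noncomm_ring) f11 + g11
    · linear_combination (norm := noncomm_ring) g11 - f11
    · linear_combination (norm := noncomm_ring) f11 - g11
    · linear_combination (norm := noncomm_ring) -f11 - g11
    · linear_combination (norm := noncomm_ring) f12 + g12
    · linear_combination (norm := noncomm_ring) f12 - g12
    · linear_combination (norm := noncomm_ring) f12 - g12
    · linear_combination (norm := noncomm_ring) f12 + g12
    · linear_combination (norm := noncomm_ring) f21 + g21
    · linear_combination (norm := noncomm_ring) g21 - f21
    · linear_combination (norm := noncomm_ring) g21 - f21
    · linear_combination (norm := noncomm_ring) f21 + g21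
    · linear_combination (norm := noncomm_ring) f22 + g22
    · linear_combination (norm := noncomm_ring) f22 - g22
    · linear_combination (norm := noncomm_ring) g22 - f22
    · linear_combination (norm := noncomm_ring) -f22 - g22

lemma gg2_det {g₀ : ℕ} {σ τ : Matrix (Fin g₀ ⊕ Fin g₀) (Fin g₀ ⊕ Fin g₀) ℝ}
    (hdetT : IsUnit σᵀ.det)
    (hF : σᵀ * Jstd (Fin g₀) ℝ * τ = Jstd (Fin g₀) ℝ) :
    τ = -(Jstd (Fin g₀) ℝ * (σ⁻¹)ᵀ * Jstd (Fin g₀) ℝ) := by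
  have h2 : Jstd (Fin g₀) ℝ * τ = (σᵀ)⁻¹ * Jstd (Fin g₀) ℝ := by
    have h3 := congrArg (fun M => (σᵀ)⁻¹ * M) hF
    simp only [← Matrix.mul_assoc] at h3
    rwa [Matrix.nonsing_inv_mul _ hdetT, Matrix.one_mul] at h3
  have h5 := congrArg (fun M => Jstd (Fin g₀) ℝ * M) h2
  simp only [← Matrix.mul_assoc, Jstd_sq, Matrix.neg_mul, Matrix.one_mul] at h5
  rw [Matrix.transpose_nonsing_inv, ← h5, neg_neg]

end AuxLemmas
theorem stmt12 (g₀ : ℕ) :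
    (∀ S ∈ {S ∈ Vspace g₀ ℝ |
        Sᵀ * Jstd (Fin g₀ ⊕ Fin g₀) ℝ * S = Jstd (Fin g₀ ⊕ Fin g₀) ℝ},
      IsUnit (gg1 S)) ∧
    (∀ σ : Matrix (Fin g₀ ⊕ Fin g₀) (Fin g₀ ⊕ Fin g₀) ℝ, IsUnit σ →
      (∃! S, S ∈ {S ∈ Vspace g₀ ℝ |
          Sᵀ * Jstd (Fin g₀ ⊕ Fin g₀) ℝ * S = Jstd (Fin g₀ ⊕ Fin g₀) ℝ} ∧
        gg1 S = σ) ∧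
      ∀ S ∈ {S ∈ Vspace g₀ ℝ |
          Sᵀ * Jstd (Fin g₀ ⊕ Fin g₀) ℝ * S = Jstd (Fin g₀ ⊕ Fin g₀) ℝ},
        gg1 S = σ → gg2 S = -(Jstd (Fin g₀) ℝ * (σ⁻¹)ᵀ * Jstd (Fin g₀) ℝ)) := by
  constructor
  · rintro S ⟨⟨a, b, c, d, p, r, x, e, rfl⟩, hsymp⟩
    obtain ⟨hF, -⟩ := (sympl_iff a b c d p r x e).mp hsymp
    rw [gg1_build]
    have hone : (fromBlocks (a+b) (c-d) (p+r) (x-e))ᵀ *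
        (Jstd (Fin g₀) ℝ * fromBlocks (a-b) (c+d) (p-r) (x+e) * -Jstd (Fin g₀) ℝ) = 1 := by
      rw [← Matrix.mul_assoc, ← Matrix.mul_assoc, hF, Matrix.mul_neg, Jstd_sq, neg_neg]
    have hdet1 : (fromBlocks (a+b) (c-d) (p+r) (x-e))ᵀ.det *
        (Jstd (Fin g₀) ℝ * fromBlocks (a-b) (c+d) (p-r) (x+e) * -Jstd (Fin g₀) ℝ).det = 1 := by
      rw [← Matrix.det_mul, hone, Matrix.det_one]
    have hd : IsUnit (fromBlocks (a+b) (c-d) (p+r) (x-e))ᵀ.det :=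
      IsUnit.of_mul_eq_one _ hdet1
    rw [Matrix.det_transpose] at hd
    exact (Matrix.isUnit_iff_isUnit_det _).mpr hd
  · intro σ hσ
    have hdet : IsUnit σ.det := (Matrix.isUnit_iff_isUnit_det σ).mp hσ
    have hdetT : IsUnit σᵀ.det := by rwa [Matrix.det_transpose]
    have hforall : ∀ S ∈ {S ∈ Vspace g₀ ℝ |
          Sᵀ * Jstd (Fin g₀ ⊕ Fin g₀) ℝ * S = Jstd (Fin g₀ ⊕ Fin g₀) ℝ},
        gg1 S = σ → gg2 S = -(Jstd (Fin g₀) ℝ * (σ⁻¹)ᵀ * Jstd (Fin g₀) ℝ) := by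
      rintro S ⟨⟨a, b, c, d, p, r, x, e, rfl⟩, hsymp⟩ hgg1
      rw [gg1_build] at hgg1
      rw [gg2_build]
      obtain ⟨hF, -⟩ := (sympl_iff a b c d p r x e).mp hsymp
      rw [hgg1] at hF
      exact gg2_det hdetT hF
    refine ⟨?_, hforall⟩
    set σ₂ := -(Jstd (Fin g₀) ℝ * (σ⁻¹)ᵀ * Jstd (Fin g₀) ℝ) with hσ₂def
    have hFσ : σᵀ * Jstd (Fin g₀) ℝ * σ₂ = Jstd (Fin g₀) ℝ := by
      rw [hσ₂def]
      simp only [Matrix.mul_neg, ← Matrix.mul_assoc]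
      rw [Matrix.mul_assoc σᵀ, Jstd_sq, mul_neg_one, Matrix.neg_mul, Matrix.neg_mul, neg_neg,
        Matrix.transpose_nonsing_inv, Matrix.mul_nonsing_inv _ hdetT, Matrix.one_mul]
    set A := (2⁻¹:ℝ) • (σ.toBlocks₁₁ + σ₂.toBlocks₁₁) with hA
    set B := (2⁻¹:ℝ) • (σ.toBlocks₁₁ - σ₂.toBlocks₁₁) with hB
    set C := (2⁻¹:ℝ) • (σ.toBlocks₁₂ + σ₂.toBlocks₁₂) with hC
    set D := (2⁻¹:ℝ) • (σ₂.toBlocks₁₂ - σ.toBlocks₁₂) with hD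
    set P := (2⁻¹:ℝ) • (σ.toBlocks₂₁ + σ₂.toBlocks₂₁) with hP
    set R := (2⁻¹:ℝ) • (σ.toBlocks₂₁ - σ₂.toBlocks₂₁) with hR
    set X := (2⁻¹:ℝ) • (σ.toBlocks₂₂ + σ₂.toBlocks₂₂) with hX
    set E := (2⁻¹:ℝ) • (σ₂.toBlocks₂₂ - σ.toBlocks₂₂) with hE
    have hab : A + B = σ.toBlocks₁₁ := by rw [hA, hB]; module
    have hcd : C - D = σ.toBlocks₁₂ := by rw [hC, hD]; module
    have hpr : P + R = σ.toBlocks₂₁ := by rw [hP, hR]; module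
    have hxe : X - E = σ.toBlocks₂₂ := by rw [hX, hE]; module
    have hab2 : A - B = σ₂.toBlocks₁₁ := by rw [hA, hB]; module
    have hcd2 : C + D = σ₂.toBlocks₁₂ := by rw [hC, hD]; module
    have hpr2 : P - R = σ₂.toBlocks₂₁ := by rw [hP, hR]; module
    have hxe2 : X + E = σ₂.toBlocks₂₂ := by rw [hX, hE]; module
    have hFb : (fromBlocks (A+B) (C-D) (P+R) (X-E))ᵀ * Jstd (Fin g₀) ℝ
        * (fromBlocks (A-B) (C+D) (P-R) (X+E)) = Jstd (Fin g₀) ℝ := by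
      rw [hab, hcd, hpr, hxe, hab2, hcd2, hpr2, hxe2,
        Matrix.fromBlocks_toBlocks, Matrix.fromBlocks_toBlocks]
      exact hFσ
    have hsymp₀ := (sympl_iff A B C D P R X E).mpr ⟨hFb, KG hFb⟩
    refine ⟨Matrix.fromBlocks (Matrix.fromBlocks A B B A) (Matrix.fromBlocks C D (-D) (-C))
        (Matrix.fromBlocks P R (-R) (-P)) (Matrix.fromBlocks X E E X),
      ⟨⟨⟨A, B, C, D, P, R, X, E, rfl⟩, hsymp₀⟩, ?_⟩, ?_⟩
    · rw [gg1_build, hab, hcd, hpr, hxe, Matrix.fromBlocks_toBlocks]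
    · rintro S' ⟨⟨⟨a, b, c, d, p, r, x, e, rfl⟩, hsymp'⟩, hg1'⟩
      have hg2' := hforall _ ⟨⟨a, b, c, d, p, r, x, e, rfl⟩, hsymp'⟩ hg1'
      rw [gg1_build] at hg1'
      rw [gg2_build] at hg2'
      have e11 := congrArg Matrix.toBlocks₁₁ hg1'
      have e12 := congrArg Matrix.toBlocks₁₂ hg1'
      have e21 := congrArg Matrix.toBlocks₂₁ hg1'
      have e22 := congrArg Matrix.toBlocks₂₂ hg1'
      have f11 := congrArg Matrix.toBlocks₁₁ hg2'
      have f12 := congrArg Matrix.toBlocks₁₂ hg2'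
      have f21 := congrArg Matrix.toBlocks₂₁ hg2'
      have f22 := congrArg Matrix.toBlocks₂₂ hg2'
      rw [Matrix.toBlocks_fromBlocks₁₁] at e11 f11
      rw [Matrix.toBlocks_fromBlocks₁₂] at e12 f12
      rw [Matrix.toBlocks_fromBlocks₂₁] at e21 f21
      rw [Matrix.toBlocks_fromBlocks₂₂] at e22 f22
      have ha : a = A := by rw [hA, ← e11, ← f11]; module
      have hb : b = B := by rw [hB, ← e11, ← f11]; module
      have hc : c = C := by rw [hC, ← e12, ← f12]; module
      have hd : d = D := by rw [hD, ← e12, ← f12]; module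
      have hp : p = P := by rw [hP, ← e21, ← f21]; module
      have hr : r = R := by rw [hR, ← e21, ← f21]; module
      have hx : x = X := by rw [hX, ← e22, ← f22]; module
      have he : e = E := by rw [hE, ← e22, ← f22]; module
      rw [ha, hb, hc, hd, hp, hr, hx, he]
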